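/- Fix n ≥ 1 and work in the field F = ℚ(q,t) of rational functions in two variables (the fraction field of ℚ[q,t]). For compositions I, J of n define u(I,k) := q^{k−d(I,k)} if k ∈ Des(I) and u(I,k) := t^{1+d(I,k)} if k ∉ Des(I) (for 1 ≤ k ≤ n−1), D_I := ∏_{k=1}^{n−1} (t^{1+d(I,k)} − q^{k−d(I,k)}) ∈ F, and g̃_{I,J} := (−1)^{ℓ(I)−ℓ(J)} · (∏_{k ∈ {1,…,n−1} \ Des(J)} u(I,k)) / D_I ∈ F. Then the matrix (g̃_{I,J}) is the inverse of the Kostka matrix (k̃_{I,J}): for all compositions I, J of n, ∑_{L composition of n} k̃_{I,L} · g̃_{L,J} equals 1 if I = J and 0 otherwise. -/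

import Mathlib

open Finset

instance {n : ℕ} : DecidableEq (Composition n) := fun a b =>
  decidable_of_iff (a.blocks = b.blocks) ⟨fun h => Composition.ext h, fun h => congrArg _ h⟩

/-- The descent set of a composition of `n`: the set of proper partial sums
`i₁, i₁+i₂, …, i₁+⋯+i_{ℓ(I)−1}`, a subset of `{1,…,n−1}`. -/
def Des {n : ℕ} (I : Composition n) : Finset ℕ :=
  (Finset.Ioo 0 I.length).image I.sizeUpTo

/-- `d I k` is the number of descents of `I` that are strictly less than `k`. -/
def d {n : ℕ} (I : Composition n) (k : ℕ) : ℕ :=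
  ((Des I).filter (· < k)).card

/-- The field `ℚ(q,t)` of rational functions, as the fraction field of `ℚ[q,t]`. -/
abbrev Fqt : Type _ := FractionRing (MvPolynomial (Fin 2) ℚ)

noncomputable def qF : Fqt := algebraMap (MvPolynomial (Fin 2) ℚ) Fqt (MvPolynomial.X 0)

noncomputable def tF : Fqt := algebraMap (MvPolynomial (Fin 2) ℚ) Fqt (MvPolynomial.X 1)

/-- The noncommutative `(q,t)`-Kostka monomial `k̃_{I,J} = ∏_{k ∈ Des I} v(J,k)`,
regarded as an element of `ℚ(q,t)`. -/
noncomputable def kostkaF {n : ℕ} (I J : Composition n) : Fqt :=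
  ∏ k ∈ Des I, if k ∈ Des J then tF ^ (1 + d J k) else qF ^ (k - d J k)

/-- `u(I,k) := q^{k−d(I,k)}` if `k ∈ Des I`, `t^{1+d(I,k)}` otherwise. -/
noncomputable def uF {n : ℕ} (I : Composition n) (k : ℕ) : Fqt :=
  if k ∈ Des I then qF ^ (k - d I k) else tF ^ (1 + d I k)

/-- `D_I := ∏_{k=1}^{n−1} (t^{1+d(I,k)} − q^{k−d(I,k)})`. -/
noncomputable def DF {n : ℕ} (I : Composition n) : Fqt :=
  ∏ k ∈ Finset.Icc 1 (n - 1), (tF ^ (1 + d I k) - qF ^ (k - d I k))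

/-- `g̃_{I,J} := (−1)^{ℓ(I)−ℓ(J)} (∏_{k ∈ {1,…,n−1} \ Des J} u(I,k)) / D_I`. -/
noncomputable def gF {n : ℕ} (I J : Composition n) : Fqt :=
  (-1 : Fqt) ^ ((I.length : ℤ) - (J.length : ℤ)) *
    (∏ k ∈ Finset.Ioo 0 n \ Des J, uF I k) / DF I

/-! ### Auxiliary material -/

lemma tF_pow_ne_qF_pow (i j : ℕ) (hi : 1 ≤ i) : tF ^ i ≠ qF ^ j := by
  have hinj : Function.Injective (algebraMap (MvPolynomial (Fin 2) ℚ) Fqt) :=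
    IsFractionRing.injective _ _
  intro h
  rw [tF, qF, ← map_pow, ← map_pow] at h
  have h2 : (MvPolynomial.X (1 : Fin 2) : MvPolynomial (Fin 2) ℚ) ^ i = MvPolynomial.X 0 ^ j :=
    hinj h
  rw [MvPolynomial.X_pow_eq_monomial, MvPolynomial.X_pow_eq_monomial] at h2
  have h3 := MvPolynomial.monomial_left_injective (one_ne_zero (α := ℚ)) h2
  have h4 : ((Finsupp.single (1 : Fin 2) i) : Fin 2 → ℕ) 1 = (Finsupp.single (0 : Fin 2) j) 1 := by
    rw [h3]
  simp [Finsupp.single_apply] at h4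
  omega

lemma den_ne_zero' (m e : ℕ) : tF ^ (1 + m) - qF ^ e ≠ 0 :=
  sub_ne_zero.mpr (tF_pow_ne_qF_pow _ _ (by omega))

/-- `d` for an abstract finset of descents. -/
def dd (M : Finset ℕ) (k : ℕ) : ℕ := (M.filter (· < k)).card

noncomputable def vterm (M : Finset ℕ) (k : ℕ) : Fqt :=
  if k ∈ M then tF ^ (1 + dd M k) else qF ^ (k - dd M k)

noncomputable def uterm (M : Finset ℕ) (k : ℕ) : Fqt :=
  if k ∈ M then qF ^ (k - dd M k) else tF ^ (1 + dd M k)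

noncomputable def den (M : Finset ℕ) (k : ℕ) : Fqt :=
  tF ^ (1 + dd M k) - qF ^ (k - dd M k)

/-- The generic summand: everything expressed in terms of descent sets. -/
noncomputable def term (P S T M : Finset ℕ) : Fqt :=
  ((-1) ^ M.card * ((∏ k ∈ S, vterm M k) * ∏ k ∈ P \ T, uterm M k)) / ∏ k ∈ P, den M k

lemma den_ne_zero (M : Finset ℕ) (k : ℕ) : den M k ≠ 0 := den_ne_zero' _ _

lemma dd_insert {a k : ℕ} (M : Finset ℕ) (h : ¬ a < k) : dd (insert a M) k = dd M k := by
  unfold dd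
  rw [Finset.filter_insert, if_neg h]

lemma dd_eq_card {a : ℕ} {M : Finset ℕ} (h : ∀ x ∈ M, x < a) : dd M a = M.card := by
  unfold dd
  rw [Finset.filter_true_of_mem h]

lemma vterm_insert {a k : ℕ} (M : Finset ℕ) (h1 : ¬ a < k) (h2 : k ≠ a) :
    vterm (insert a M) k = vterm M k := by
  unfold vterm
  rw [dd_insert M h1]
  simp [Finset.mem_insert, h2]

lemma uterm_insert {a k : ℕ} (M : Finset ℕ) (h1 : ¬ a < k) (h2 : k ≠ a) :
    uterm (insert a M) k = uterm M k := by
  unfold uterm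
  rw [dd_insert M h1]
  simp [Finset.mem_insert, h2]

lemma den_insert {a k : ℕ} (M : Finset ℕ) (h1 : ¬ a < k) :
    den (insert a M) k = den M k := by
  unfold den
  rw [dd_insert M h1]

lemma step_lemma (a : ℕ) (s S T M : Finset ℕ) (has : a ∉ s) (hmax : ∀ x ∈ s, x < a)
    (hS : S ⊆ insert a s) (hM : M ⊆ s) :
    term (insert a s) S T M + term (insert a s) S T (insert a M)
      = (if a ∈ S then (if a ∈ T then (-1 : Fqt) else 0)
          else (if a ∈ T then 0 else 1))
        * term s (S.erase a) (T.erase a) M := by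
  classical
  have haM : a ∉ M := fun h => has (hM h)
  have hMlt : ∀ x ∈ M, x < a := fun x hx => hmax x (hM hx)
  have hm : dd M a = M.card := dd_eq_card hMlt
  have hma : dd (insert a M) a = M.card := by rw [dd_insert M (lt_irrefl a), hm]
  set A := tF ^ (1 + M.card) with hA
  set B := qF ^ (a - M.card) with hB
  have hdenMa : den M a = A - B := by rw [den, hm]
  have hvMa : vterm M a = B := by rw [vterm, if_neg haM, hm]
  have huMa : uterm M a = A := by rw [uterm, if_neg haM, hm]
  have hvM2a : vterm (insert a M) a = A := by
    rw [vterm, if_pos (Finset.mem_insert_self a M), hma]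
  have huM2a : uterm (insert a M) a = B := by
    rw [uterm, if_pos (Finset.mem_insert_self a M), hma]
  have hcong_v : ∀ k ∈ S.erase a, vterm (insert a M) k = vterm M k := by
    intro k hk
    have hks : k ∈ s := by
      rcases Finset.mem_insert.mp (hS (Finset.mem_of_mem_erase hk)) with h | h
      · exact absurd h (Finset.ne_of_mem_erase hk)
      · exact h
    exact vterm_insert M (by have := hmax k hks; omega) (by have := hmax k hks; omega)
  have hcong_u : ∀ k ∈ s \ T, uterm (insert a M) k = uterm M k := by
    intro k hk
    have hks : k ∈ s := (Finset.mem_sdiff.mp hk).1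
    exact uterm_insert M (by have := hmax k hks; omega) (by have := hmax k hks; omega)
  have hcong_d : ∀ k ∈ s, den (insert a M) k = den M k := fun k hk =>
    den_insert M (by have := hmax k hk; omega)
  have hD1 : ∏ k ∈ insert a s, den M k = (A - B) * ∏ k ∈ s, den M k := by
    rw [Finset.prod_insert has, hdenMa]
  have hD2 : ∏ k ∈ insert a s, den (insert a M) k = (A - B) * ∏ k ∈ s, den M k := by
    rw [Finset.prod_insert has, den_insert M (lt_irrefl a), hdenMa,
      Finset.prod_congr rfl hcong_d]
  have hDne : (∏ k ∈ s, den M k) ≠ 0 := Finset.prod_ne_zero_iff.mpr fun k _ => den_ne_zero M k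
  have hABne : A - B ≠ 0 := den_ne_zero' _ _
  have hsdT : s \ T.erase a = s \ T := by
    ext x
    simp only [Finset.mem_sdiff, Finset.mem_erase]
    constructor
    · rintro ⟨hx, h⟩
      exact ⟨hx, fun hxT => h ⟨fun he => has (he ▸ hx), hxT⟩⟩
    · rintro ⟨hx, h⟩
      exact ⟨hx, fun he => h he.2⟩
  have hPS2 : ∏ k ∈ S.erase a, vterm (insert a M) k = ∏ k ∈ S.erase a, vterm M k :=
    Finset.prod_congr rfl hcong_v
  have hPU2 : ∏ k ∈ s \ T, uterm (insert a M) k = ∏ k ∈ s \ T, uterm M k :=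
    Finset.prod_congr rfl hcong_u
  have hcard : (insert a M).card = M.card + 1 := Finset.card_insert_of_notMem haM
  have hansdT : a ∉ s \ T := fun h => has (Finset.mem_sdiff.mp h).1
  by_cases haT : a ∈ T <;> by_cases haS : a ∈ S
  · rw [term, term, term, hsdT, Finset.insert_sdiff_of_mem _ haT, hcard, hD1, hD2,
      ← Finset.mul_prod_erase S (vterm M) haS,
      ← Finset.mul_prod_erase S (vterm (insert a M)) haS,
      hvMa, hvM2a, hPS2, hPU2, if_pos haS, if_pos haT]
    field_simp
    ring
  · rw [term, term, term, hsdT, Finset.insert_sdiff_of_mem _ haT, hcard, hD1, hD2,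
      Finset.erase_eq_of_notMem haS, hPU2, if_neg haS, if_pos haT,
      show ∏ k ∈ S, vterm (insert a M) k = ∏ k ∈ S, vterm M k from
        Finset.prod_congr rfl fun k hk =>
          hcong_v k (Finset.mem_erase.mpr ⟨fun he => haS (he ▸ hk), hk⟩)]
    field_simp
    ring
  · rw [term, term, term, hsdT, Finset.insert_sdiff_of_notMem _ haT, hcard, hD1, hD2,
      ← Finset.mul_prod_erase S (vterm M) haS,
      ← Finset.mul_prod_erase S (vterm (insert a M)) haS,
      hvMa, hvM2a, hPS2,
      Finset.prod_insert hansdT, Finset.prod_insert hansdT,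
      huMa, huM2a, hPU2, if_pos haS, if_neg haT]
    field_simp
    ring
  · rw [term, term, term, hsdT, Finset.insert_sdiff_of_notMem _ haT, hcard, hD1, hD2,
      Finset.erase_eq_of_notMem haS,
      Finset.prod_insert hansdT, Finset.prod_insert hansdT,
      huMa, huM2a, hPU2, if_neg haS, if_neg haT,
      show ∏ k ∈ S, vterm (insert a M) k = ∏ k ∈ S, vterm M k from
        Finset.prod_congr rfl fun k hk =>
          hcong_v k (Finset.mem_erase.mpr ⟨fun he => haS (he ▸ hk), hk⟩)]
    field_simp
    ring

lemma key_lemma (P : Finset ℕ) :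
    ∀ S T : Finset ℕ, S ⊆ P → T ⊆ P →
      ∑ M ∈ P.powerset, term P S T M
        = (-1 : Fqt) ^ T.card * (if S = T then 1 else 0) := by
  induction P using Finset.induction_on_max with
  | empty =>
    intro S T hS hT
    rw [Finset.subset_empty.mp hS, Finset.subset_empty.mp hT]
    simp [term]
  | insert a s hmax IH =>
    intro S T hS hT
    have has : a ∉ s := fun h => lt_irrefl a (hmax a h)
    have hS' : S.erase a ⊆ s := by
      intro x hx
      rcases Finset.mem_insert.mp (hS (Finset.mem_of_mem_erase hx)) with h | h
      · exact absurd h (Finset.ne_of_mem_erase hx)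
      · exact h
    have hT' : T.erase a ⊆ s := by
      intro x hx
      rcases Finset.mem_insert.mp (hT (Finset.mem_of_mem_erase hx)) with h | h
      · exact absurd h (Finset.ne_of_mem_erase hx)
      · exact h
    rw [Finset.sum_powerset_insert has, ← Finset.sum_add_distrib,
      Finset.sum_congr rfl fun M hM =>
        step_lemma a s S T M has hmax hS (Finset.mem_powerset.mp hM),
      ← Finset.mul_sum, IH _ _ hS' hT']
    by_cases haT : a ∈ T <;> by_cases haS : a ∈ S
    · have hd : (S.erase a = T.erase a) = (S = T) := propext
        ⟨fun h => by rw [← Finset.insert_erase haS, ← Finset.insert_erase haT, h],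
         fun h => by rw [h]⟩
      rw [if_pos haS, if_pos haT,
        if_congr (iff_of_eq hd) rfl rfl, ← Finset.card_erase_add_one haT, pow_succ]
      ring
    · have hne : S ≠ T := fun h => haS (h ▸ haT)
      rw [if_neg haS, if_pos haT, if_neg hne]
      ring
    · have hne : S ≠ T := fun h => haT (h ▸ haS)
      rw [if_pos haS, if_neg haT, if_neg hne]
      ring
    · rw [if_neg haS, if_neg haT, Finset.erase_eq_of_notMem haS,
        Finset.erase_eq_of_notMem haT]
      ring

lemma sizeUpTo_lt {n : ℕ} (I : Composition n) {i j : ℕ} (hij : i < j) (hj : j ≤ I.length) :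
    I.sizeUpTo i < I.sizeUpTo j :=
  lt_of_lt_of_le (I.sizeUpTo_strict_mono (by omega)) (I.monotone_sizeUpTo (by omega : i + 1 ≤ j))

lemma Des_subset {n : ℕ} (I : Composition n) : Des I ⊆ Finset.Ioo 0 n := by
  intro x hx
  simp only [Des, Finset.mem_image, Finset.mem_Ioo] at hx ⊢
  obtain ⟨i, ⟨hi0, hil⟩, rfl⟩ := hx
  refine ⟨?_, ?_⟩
  · calc 0 = I.sizeUpTo 0 := I.sizeUpTo_zero.symm
      _ < I.sizeUpTo i := sizeUpTo_lt I hi0 (le_of_lt hil)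
  · calc I.sizeUpTo i < I.sizeUpTo I.length := sizeUpTo_lt I hil le_rfl
      _ = n := I.sizeUpTo_length

lemma card_Des {n : ℕ} (I : Composition n) : (Des I).card = I.length - 1 := by
  have hinj : Set.InjOn I.sizeUpTo (Finset.Ioo 0 I.length) := by
    intro i hi j hj hij
    simp only [Finset.coe_Ioo, Set.mem_Ioo] at hi hj
    by_contra hne
    rcases lt_or_gt_of_ne hne with h | h
    · exact absurd hij (ne_of_lt (sizeUpTo_lt I h (le_of_lt hj.2)))
    · exact absurd hij.symm (ne_of_lt (sizeUpTo_lt I h (le_of_lt hi.2)))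
  rw [Des, Finset.card_image_of_injOn hinj, Nat.card_Ioo, Nat.sub_zero]

lemma mem_boundaries_iff {n : ℕ} (I : Composition n) (x : Fin (n + 1)) :
    x ∈ I.boundaries ↔ (x : ℕ) ∈ insert 0 (insert n (Des I)) := by
  simp only [Composition.boundaries, Finset.mem_map, Finset.mem_univ, true_and,
    Finset.mem_insert, Des, Finset.mem_image, Finset.mem_Ioo]
  constructor
  · rintro ⟨i, rfl⟩
    have hval : ((I.boundary.toEmbedding i : Fin (n + 1)) : ℕ) = I.sizeUpTo i := rfl
    rw [hval]
    by_cases h0 : (i : ℕ) = 0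
    · left; rw [h0]; exact I.sizeUpTo_zero
    by_cases hl : (i : ℕ) = I.length
    · right; left; rw [hl]; exact I.sizeUpTo_length
    · right; right
      exact ⟨i, ⟨by omega, by have := i.isLt; omega⟩, rfl⟩
  · intro hx
    rcases hx with h0 | hn | ⟨i, ⟨hi0, hil⟩, hx⟩
    · refine ⟨0, Fin.ext ?_⟩
      show I.sizeUpTo 0 = (x : ℕ)
      rw [I.sizeUpTo_zero, h0]
    · refine ⟨Fin.last I.length, Fin.ext ?_⟩
      show I.sizeUpTo I.length = (x : ℕ)
      rw [I.sizeUpTo_length, hn]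
    · exact ⟨⟨i, by omega⟩, Fin.ext hx⟩

lemma Des_injective {n : ℕ} : Function.Injective (Des (n := n)) := by
  intro I J h
  apply (compositionEquiv n).injective
  apply CompositionAsSet.ext
  show I.boundaries = J.boundaries
  ext x
  rw [mem_boundaries_iff, mem_boundaries_iff, h]

lemma Des_image {n : ℕ} :
    (Finset.univ : Finset (Composition n)).image Des = (Finset.Ioo 0 n).powerset := by
  apply Finset.eq_of_subset_of_card_le
  · intro M hM
    obtain ⟨I, _, rfl⟩ := Finset.mem_image.mp hM
    exact Finset.mem_powerset.mpr (Des_subset I)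
  · rw [Finset.card_powerset, Nat.card_Ioo, Finset.card_image_of_injective _ Des_injective,
      Finset.card_univ, composition_card, Nat.sub_zero]

lemma length_eq {n : ℕ} (hn : 1 ≤ n) (I : Composition n) : I.length = (Des I).card + 1 := by
  have h1 := card_Des I
  have h2 : 0 < I.length := I.length_pos_of_pos hn
  omega

lemma neg_one_zpow_sub (x y : ℕ) :
    (-1 : Fqt) ^ ((x : ℤ) - (y : ℤ)) = (-1) ^ x * (-1) ^ y := by
  rw [zpow_sub₀ (by norm_num : (-1 : Fqt) ≠ 0), zpow_natCast, zpow_natCast, div_eq_mul_inv,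
    ← inv_pow, inv_neg, inv_one]

lemma summand_eq {n : ℕ} (hn : 1 ≤ n) (I J L : Composition n) :
    kostkaF I L * gF L J
      = (-1 : Fqt) ^ (Des J).card * term (Finset.Ioo 0 n) (Des I) (Des J) (Des L) := by
  have hIcc : Finset.Icc 1 (n - 1) = Finset.Ioo 0 n := by
    ext x
    simp only [Finset.mem_Icc, Finset.mem_Ioo]
    omega
  have hk : kostkaF I L = ∏ k ∈ Des I, vterm (Des L) k := rfl
  have hD : DF L = ∏ k ∈ Finset.Ioo 0 n, den (Des L) k := by rw [DF, hIcc]; rfl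
  have hu : (∏ k ∈ Finset.Ioo 0 n \ Des J, uF L k)
      = ∏ k ∈ Finset.Ioo 0 n \ Des J, uterm (Des L) k := rfl
  have hexp : ((L.length : ℤ) - (J.length : ℤ)) = ((Des L).card : ℤ) - ((Des J).card : ℤ) := by
    rw [length_eq hn L, length_eq hn J]
    push_cast
    ring
  rw [gF, hk, hD, hu, hexp, neg_one_zpow_sub, term]
  ring

/-- The matrix `(g̃_{I,J})` is inverse to the Kostka matrix `(k̃_{I,J})`:
`∑_L k̃_{I,L} g̃_{L,J} = δ_{I,J}`. -/
theorem kostka_mul_g_eq_delta {n : ℕ} (hn : 1 ≤ n) (I J : Composition n) :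
    ∑ L : Composition n, kostkaF I L * gF L J = if I = J then 1 else 0 := by
  classical
  rw [Finset.sum_congr rfl fun L _ => summand_eq hn I J L, ← Finset.mul_sum]
  have h2 : ∑ L : Composition n, term (Finset.Ioo 0 n) (Des I) (Des J) (Des L)
      = ∑ M ∈ (Finset.Ioo 0 n).powerset, term (Finset.Ioo 0 n) (Des I) (Des J) M := by
    rw [← Des_image, Finset.sum_image fun x _ y _ h => Des_injective h]
  rw [h2, key_lemma _ _ _ (Des_subset I) (Des_subset J), ← mul_assoc, ← pow_add]
  have heven : (-1 : Fqt) ^ ((Des J).card + (Des J).card) = 1 :=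
    Even.neg_one_pow ⟨(Des J).card, rfl⟩
  rw [heven, one_mul,
    if_congr ⟨fun h => Des_injective h, fun h => by rw [h]⟩ rfl rfl]
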